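/- Let μ = λ|_{[-1/2,1/2]} be Lebesgue measure on ℝ restricted to the interval [-1/2, 1/2]. If ν is a frame measure for μ, then the lower Beurling density satisfies D⁻(ν) > 0, and consequently dim ν = 1. -/

import Mathlib

open MeasureTheory Filter Metric Complex Set
open scoped ENNReal NNReal Real Topology

noncomputable section

/-- The Fourier transform of the measure `f dμ` on `ℝ`:
`(f dμ)^(t) = ∫ f(x) e^{-2πi t x} dμ(x)`. -/
def ftm1 (μ : Measure ℝ) (f : ℝ → ℂ) (t : ℝ) : ℂ :=
  ∫ x, f x * Complex.exp (-(2 * Real.pi * t * x) * Complex.I) ∂μ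

/-- `ν` is a Bessel measure for `μ` with bound `B`. -/
def IsBesselBound1 (μ ν : Measure ℝ) (B : ℝ) : Prop :=
  ∀ f : ℝ → ℂ, MemLp f 2 μ →
    ∫⁻ t, (‖ftm1 μ f t‖₊ : ℝ≥0∞) ^ 2 ∂ν ≤ ENNReal.ofReal B * ∫⁻ x, (‖f x‖₊ : ℝ≥0∞) ^ 2 ∂μ

/-- `ν` is a frame measure for `μ` with bounds `A, B`. -/
def IsFrameBounds1 (μ ν : Measure ℝ) (A B : ℝ) : Prop :=
  ∀ f : ℝ → ℂ, MemLp f 2 μ →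
    ENNReal.ofReal A * ∫⁻ x, (‖f x‖₊ : ℝ≥0∞) ^ 2 ∂μ ≤ ∫⁻ t, (‖ftm1 μ f t‖₊ : ℝ≥0∞) ^ 2 ∂ν ∧
    ∫⁻ t, (‖ftm1 μ f t‖₊ : ℝ≥0∞) ^ 2 ∂ν ≤ ENNReal.ofReal B * ∫⁻ x, (‖f x‖₊ : ℝ≥0∞) ^ 2 ∂μ

/-- The interval `x + R·Q` where `Q = [0,1)`. -/
def cube1 (x R : ℝ) : Set ℝ := Set.Ico x (x + R)

/-- The `α`-upper Beurling density on `ℝ`. -/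
def beurlingDensity1 (ν : Measure ℝ) (α : ℝ) : ℝ≥0∞ :=
  limsup (fun R : ℝ => ⨆ x : ℝ, ν (cube1 x R) / ENNReal.ofReal (R ^ α)) atTop

/-- The upper Beurling dimension on `ℝ`. -/
def beurlingDim1 (ν : Measure ℝ) : ℝ≥0∞ :=
  ⨆ (α : ℝ) (_ : 0 ≤ α) (_ : beurlingDensity1 ν α = ∞), ENNReal.ofReal α

/-- The lower Beurling density on `ℝ`: `D⁻(ν) = liminf_{R→∞} inf_x ν(x+RQ)/R`. -/
def lowerBeurlingDensity1 (ν : Measure ℝ) : ℝ≥0∞ :=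
  liminf (fun R : ℝ => ⨅ x : ℝ, ν (cube1 x R) / ENNReal.ofReal R) atTop

def S (s : ℝ) : ℝ := if s = 0 then 1 else Real.sin (Real.pi * s) / (Real.pi * s)

lemma S_sq_le_one (s : ℝ) : S s ^ 2 ≤ 1 := by
  rcases eq_or_ne s 0 with rfl | hs
  · simp [S]
  · rw [S, if_neg hs, div_pow, div_le_one (by positivity)]
    exact Real.sin_sq_le_sq

lemma S_sq_lower {s : ℝ} (h : |s| ≤ 1/2) : 4 / Real.pi ^ 2 ≤ S s ^ 2 := by
  have hπ := Real.pi_gt_three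
  rcases eq_or_ne s 0 with rfl | hs
  · rw [S, if_pos rfl]; rw [div_le_iff₀ (by positivity)]; nlinarith
  · have habs : |Real.pi * s| ≤ Real.pi / 2 := by
      rw [abs_mul, abs_of_pos (by linarith)]
      nlinarith [abs_nonneg s]
    have h2 : 2 / Real.pi * |Real.pi * s| ≤ |Real.sin (Real.pi * s)| :=
      Real.mul_abs_le_abs_sin habs
    have h3 : 2 * |s| ≤ |Real.sin (Real.pi * s)| := by
      rw [abs_mul, abs_of_pos (by linarith)] at h2
      calc 2 * |s| = 2 / Real.pi * (Real.pi * |s|) := by field_simp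
        _ ≤ _ := h2
    have h4 : 4 * s ^ 2 ≤ Real.sin (Real.pi * s) ^ 2 := by
      nlinarith [_root_.sq_abs s, _root_.sq_abs (Real.sin (Real.pi * s)), abs_nonneg s,
        abs_nonneg (Real.sin (Real.pi * s))]
    rw [S, if_neg hs, div_pow, div_le_div_iff₀ (by positivity) (by positivity)]
    nlinarith

lemma S_sq_tail {s k : ℝ} (hk : 1 ≤ k) (h : k ≤ |s|) : S s ^ 2 ≤ 1 / (k * (k + 1)) := by
  have hπ := Real.pi_gt_three
  have hs : s ≠ 0 := by intro h0; rw [h0, abs_zero] at h; linarith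
  rw [S, if_neg hs, div_pow]
  have h1 : Real.sin (Real.pi * s) ^ 2 ≤ 1 := Real.sin_sq_le_one _
  have hs2 : k ^ 2 ≤ s ^ 2 := by nlinarith [_root_.sq_abs s, abs_nonneg s]
  have h2 : k * (k + 1) ≤ (Real.pi * s) ^ 2 := by
    have he : (Real.pi * s)^2 = Real.pi^2 * s^2 := by ring
    have h9 : (9:ℝ) ≤ Real.pi^2 := by nlinarith
    have h10 : 9 * k^2 ≤ Real.pi^2 * s^2 := by nlinarith [sq_nonneg s, sq_nonneg k]
    nlinarith
  calc Real.sin (Real.pi * s) ^ 2 / (Real.pi * s) ^ 2 ≤ 1 / (Real.pi * s) ^ 2 := by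
        apply div_le_div_of_nonneg_right h1 (by positivity) |>.trans_eq rfl
      _ ≤ 1 / (k * (k + 1)) := one_div_le_one_div_of_le (by positivity) h2


def fmod (c : ℝ) : ℝ → ℂ := fun y => Complex.exp (((2 * Real.pi * c * y : ℝ) : ℂ) * Complex.I)

abbrev μ₀ : Measure ℝ := volume.restrict (Set.Icc (-(1 / 2) : ℝ) (1 / 2))

lemma μ₀_univ : μ₀ Set.univ = 1 := by
  rw [Measure.restrict_apply_univ, Real.volume_Icc]
  norm_num

lemma fmod_norm (c y : ℝ) : ‖fmod c y‖ = 1 := by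
  rw [fmod, Complex.norm_exp_ofReal_mul_I]

lemma fmod_memℒp (c : ℝ) : MemLp (fmod c) 2 μ₀ := by
  have hfin : IsFiniteMeasure μ₀ := ⟨by rw [μ₀_univ]; exact ENNReal.one_lt_top⟩
  have hcont : Continuous (fmod c) := by
    apply Complex.continuous_exp.comp
    fun_prop
  refine MemLp.of_le (memLp_const (1 : ℂ)) hcont.aestronglyMeasurable ?_
  filter_upwards with y
  rw [fmod_norm]
  simp

lemma fmod_l2 (c : ℝ) : ∫⁻ x, (‖fmod c x‖₊ : ℝ≥0∞) ^ 2 ∂μ₀ = 1 := by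
  have : ∀ x : ℝ, (‖fmod c x‖₊ : ℝ≥0∞) ^ 2 = 1 := by
    intro x
    have : ‖fmod c x‖₊ = 1 := by
      ext; rw [coe_nnnorm, fmod_norm]; rfl
    rw [this]; simp
  simp_rw [this, lintegral_one, μ₀_univ]

lemma sinc_integral (s : ℝ) :
    ∫ y in Set.Icc (-(1/2) : ℝ) (1/2), Complex.exp (((-(2*Real.pi*s)*y : ℝ) : ℂ) * Complex.I)
      = (S s : ℂ) := by
  rcases eq_or_ne s 0 with rfl | hs
  · simp [S]
    norm_num
  · have hπs : Real.pi * s ≠ 0 := mul_ne_zero Real.pi_ne_zero hs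
    have hc : ((-(2*Real.pi*s) : ℝ) : ℂ) * Complex.I ≠ 0 := by
      intro h
      rw [mul_eq_zero] at h
      rcases h with h | h
      · rw [Complex.ofReal_eq_zero] at h
        exact hπs (by nlinarith)
      · exact Complex.I_ne_zero h
    have h1 : ∀ y : ℝ, (((-(2*Real.pi*s) * y : ℝ)) : ℂ) * Complex.I
        = (((-(2*Real.pi*s) : ℝ) : ℂ) * Complex.I) * (y : ℝ) := by intro y; push_cast; ring
    calc ∫ y in Set.Icc (-(1/2) : ℝ) (1/2), Complex.exp (((-(2*Real.pi*s)*y : ℝ):ℂ) * Complex.I)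
        = ∫ y in (-(1/2) : ℝ)..(1/2), Complex.exp ((((-(2*Real.pi*s):ℝ):ℂ) * Complex.I) * y) := by
          rw [MeasureTheory.integral_Icc_eq_integral_Ioc,
            ← intervalIntegral.integral_of_le (by norm_num : (-(1/2):ℝ) ≤ 1/2)]
          congr 1; ext y; rw [h1]
      _ = (Complex.exp ((((-(2*Real.pi*s):ℝ):ℂ) * Complex.I) * ((1/2:ℝ):ℂ))
            - Complex.exp ((((-(2*Real.pi*s):ℝ):ℂ) * Complex.I) * ((-(1/2):ℝ):ℂ)))
            / ((((-(2*Real.pi*s):ℝ):ℂ) * Complex.I)) := integral_exp_mul_complex hc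
      _ = (S s : ℂ) := by
          have e1 : (((-(2*Real.pi*s):ℝ):ℂ) * Complex.I) * ((1/2:ℝ):ℂ)
              = ((-(Real.pi*s) : ℝ) : ℂ) * Complex.I := by push_cast; ring
          have e2 : (((-(2*Real.pi*s):ℝ):ℂ) * Complex.I) * ((-(1/2):ℝ):ℂ)
              = (((Real.pi*s) : ℝ) : ℂ) * Complex.I := by push_cast; ring
          rw [e1, e2, Complex.exp_mul_I, Complex.exp_mul_I, S, if_neg hs]
          rw [div_eq_iff hc]
          have hsin : Complex.sin (((Real.pi*s : ℝ)):ℂ) = ((Real.sin (Real.pi*s) : ℝ) : ℂ) :=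
            (Complex.ofReal_sin _).symm
          have hcos : Complex.cos (((Real.pi*s : ℝ)):ℂ) = ((Real.cos (Real.pi*s) : ℝ) : ℂ) :=
            (Complex.ofReal_cos _).symm
          push_cast
          rw [Complex.cos_neg, Complex.sin_neg]
          have hπsC : ((Real.pi : ℂ) * (s:ℂ)) ≠ 0 := by
            have : (((Real.pi * s : ℝ)) : ℂ) ≠ 0 := by exact_mod_cast hπs
            push_cast at this; exact this
          have hsC : (s:ℂ) ≠ 0 := by exact_mod_cast hs
          field_simp
          ring

lemma ftm_fmod (c t : ℝ) : ftm1 μ₀ (fmod c) t = ((S (t - c) : ℝ) : ℂ) := by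
  rw [ftm1, ← sinc_integral (t - c)]
  show ∫ x, fmod c x * Complex.exp (-(2 * ↑Real.pi * ↑t * ↑x) * Complex.I) ∂μ₀ = _
  congr 1
  ext y
  rw [fmod, ← Complex.exp_add]
  congr 1
  push_cast
  ring

lemma ftm_nnnorm (c t : ℝ) :
    ((‖ftm1 μ₀ (fmod c) t‖₊ : ℝ≥0∞)) ^ 2 = ENNReal.ofReal (S (t - c) ^ 2) := by
  rw [ftm_fmod]
  rw [← enorm_eq_nnnorm, ← ofReal_norm]
  rw [Complex.norm_real, Real.norm_eq_abs, ← ENNReal.ofReal_pow (abs_nonneg _), _root_.sq_abs]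


variable {ν : Measure ℝ} {A B : ℝ}

-- upper estimate
lemma nu_Icc_le (hB : 0 < B)
    (hbes : ∀ c : ℝ, ∫⁻ t, ENNReal.ofReal (S (t - c) ^ 2) ∂ν ≤ ENNReal.ofReal B)
    (a : ℝ) : ν (Set.Icc a (a + 1)) ≤ ENNReal.ofReal (B * Real.pi ^ 2 / 4) := by
  have hπ := Real.pi_pos
  set c := a + 1/2 with hc
  have h1 : ENNReal.ofReal (4 / Real.pi ^ 2) * ν (Set.Icc a (a + 1))
      ≤ ENNReal.ofReal B := by
    calc ENNReal.ofReal (4 / Real.pi ^ 2) * ν (Set.Icc a (a + 1))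
        = ∫⁻ _ in Set.Icc a (a + 1), ENNReal.ofReal (4 / Real.pi ^ 2) ∂ν :=
          (setLIntegral_const _ _).symm
      _ ≤ ∫⁻ t in Set.Icc a (a + 1), ENNReal.ofReal (S (t - c) ^ 2) ∂ν := by
          refine setLIntegral_mono' measurableSet_Icc fun t ht => ?_
          refine ENNReal.ofReal_le_ofReal (S_sq_lower ?_)
          obtain ⟨h1, h2⟩ := ht
          rw [abs_le]
          constructor <;> simp only [hc] <;> linarith
      _ ≤ ∫⁻ t, ENNReal.ofReal (S (t - c) ^ 2) ∂ν := setLIntegral_le_lintegral _ _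
      _ ≤ ENNReal.ofReal B := hbes c
  have h2 := mul_le_mul_right h1 (ENNReal.ofReal (Real.pi ^ 2 / 4))
  rw [← mul_assoc, ← ENNReal.ofReal_mul (by positivity), ← ENNReal.ofReal_mul (by positivity)] at h2
  have h3 : Real.pi ^ 2 / 4 * (4 / Real.pi ^ 2) = 1 := by field_simp
  have h4 : Real.pi ^ 2 / 4 * B = B * Real.pi ^ 2 / 4 := by ring
  rwa [h3, h4, ENNReal.ofReal_one, one_mul] at h2

-- telescoping sum
lemma telescope (M : ℕ) (hM : 1 ≤ M) (n : ℕ) :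
    ∑ i ∈ Finset.range n, (1:ℝ) / (((M:ℝ) + i) * ((M:ℝ) + i + 1)) = 1/(M:ℝ) - 1/((M:ℝ) + n) := by
  have hM0 : (0:ℝ) < M := by exact_mod_cast hM
  induction n with
  | zero => simp
  | succ n ih =>
    rw [Finset.sum_range_succ, ih]
    have h1 : (0:ℝ) < (M:ℝ) + n := by positivity
    have h2 : (0:ℝ) < (M:ℝ) + n + 1 := by positivity
    push_cast
    field_simp
    ring

lemma tsum_telescope_le (M : ℕ) (hM : 1 ≤ M) :
    ∑' k : ℕ, ENNReal.ofReal ((1:ℝ) / (((M:ℝ) + k) * ((M:ℝ) + k + 1)))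
      ≤ ENNReal.ofReal (1/(M:ℝ)) := by
  have hM0 : (0:ℝ) < M := by exact_mod_cast hM
  apply ENNReal.tsum_le_of_sum_range_le
  intro n
  rw [← ENNReal.ofReal_sum_of_nonneg (fun i _ => by positivity)]
  apply ENNReal.ofReal_le_ofReal
  rw [telescope M hM n]
  have : (0:ℝ) ≤ 1/((M:ℝ)+n) := by positivity
  linarith

lemma nu_big (hA : 0 < A) (hB : 0 < B)
    (hbes : ∀ c : ℝ, ∫⁻ t, ENNReal.ofReal (S (t - c) ^ 2) ∂ν ≤ ENNReal.ofReal B)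
    (hlow : ∀ c : ℝ, ENNReal.ofReal A ≤ ∫⁻ t, ENNReal.ofReal (S (t - c) ^ 2) ∂ν)
    (M : ℕ) (hM : 1 ≤ M) (htail : B * Real.pi ^ 2 / (2 * M) ≤ A / 2) (c : ℝ) :
    ENNReal.ofReal (A / 2) ≤ ν (Set.Icc (c - M) (c + M)) := by
  have hπ := Real.pi_pos
  have hM0 : (0:ℝ) < M := by exact_mod_cast hM
  set E : Set ℝ := Set.Icc (c - M) (c + M) with hE
  have hEm : MeasurableSet E := measurableSet_Icc
  set g : ℝ → ℝ≥0∞ := fun t => ENNReal.ofReal (S (t - c) ^ 2) with hg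
  -- the covering pieces
  set P : ℕ → Set ℝ := fun k => Set.Ico (c + M + k) (c + M + k + 1) with hP
  set Q : ℕ → Set ℝ := fun k => Set.Ioc (c - M - k - 1) (c - M - k) with hQ
  have hcover : Eᶜ ⊆ ⋃ k : ℕ, (P k ∪ Q k) := by
    intro t ht
    simp only [hE, Set.mem_compl_iff, Set.mem_Icc, not_and_or, not_le] at ht
    rcases ht with ht | ht
    · -- t < c - M
      set u : ℝ := (c - M) - t with hu
      have hu0 : 0 < u := by simp [hu]; linarith
      refine Set.mem_iUnion.mpr ⟨⌊u⌋₊, Or.inr ?_⟩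
      have h1 : (⌊u⌋₊ : ℝ) ≤ u := Nat.floor_le hu0.le
      have h2 : u < ⌊u⌋₊ + 1 := Nat.lt_floor_add_one u
      simp only [hQ, Set.mem_Ioc]
      constructor <;> simp only [hu] at h1 h2 <;> linarith
    · -- c + M < t
      set u : ℝ := t - (c + M) with hu
      have hu0 : 0 < u := by simp [hu]; linarith
      refine Set.mem_iUnion.mpr ⟨⌊u⌋₊, Or.inl ?_⟩
      have h1 : (⌊u⌋₊ : ℝ) ≤ u := Nat.floor_le hu0.le
      have h2 : u < ⌊u⌋₊ + 1 := Nat.lt_floor_add_one u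
      simp only [hP, Set.mem_Ico]
      constructor <;> simp only [hu] at h1 h2 <;> linarith
  -- bound on each piece
  have hbound : ∀ k : ℕ, ∀ t : ℝ, t ∈ P k ∪ Q k →
      g t ≤ ENNReal.ofReal ((1:ℝ) / (((M:ℝ) + k) * ((M:ℝ) + k + 1))) := by
    intro k t ht
    have hk1 : (1:ℝ) ≤ (M:ℝ) + k := by
      have h0 : (0:ℝ) ≤ (k:ℝ) := Nat.cast_nonneg k
      have h1 : (1:ℝ) ≤ (M:ℝ) := by exact_mod_cast hM
      linarith
    have habs : (M:ℝ) + k ≤ |t - c| := by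
      rcases ht with ht | ht
      · simp only [hP, Set.mem_Ico] at ht
        rw [_root_.abs_of_nonneg (by linarith [ht.1])]
        linarith [ht.1]
      · simp only [hQ, Set.mem_Ioc] at ht
        rw [_root_.abs_of_nonpos (by linarith [ht.2])]
        linarith [ht.2]
    exact ENNReal.ofReal_le_ofReal (S_sq_tail hk1 habs)
  -- measure of each piece
  have hνP : ∀ k : ℕ, ν (P k) ≤ ENNReal.ofReal (B * Real.pi ^ 2 / 4) := by
    intro k
    refine le_trans (measure_mono ?_) (nu_Icc_le hB hbes (c + M + k))
    exact fun t ht => ⟨ht.1, ht.2.le⟩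
  have hνQ : ∀ k : ℕ, ν (Q k) ≤ ENNReal.ofReal (B * Real.pi ^ 2 / 4) := by
    intro k
    refine le_trans (measure_mono ?_) (nu_Icc_le hB hbes (c - M - k - 1))
    intro t ht
    exact ⟨ht.1.le, by linarith [ht.2]⟩
  set Cν := ENNReal.ofReal (B * Real.pi ^ 2 / 4) with hCν
  set a : ℕ → ℝ≥0∞ := fun k => ENNReal.ofReal ((1:ℝ) / (((M:ℝ) + k) * ((M:ℝ) + k + 1))) with ha
  have hsplit : ∫⁻ t, g t ∂ν = ∫⁻ t in E, g t ∂ν + ∫⁻ t in Eᶜ, g t ∂ν :=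
    (lintegral_add_compl g hEm).symm
  have hEbound : ∫⁻ t in E, g t ∂ν ≤ ν E := by
    calc ∫⁻ t in E, g t ∂ν ≤ ∫⁻ _ in E, 1 ∂ν :=
          setLIntegral_mono' hEm fun t _ => ENNReal.ofReal_le_one.mpr (S_sq_le_one _)
      _ = ν E := setLIntegral_one _
  have hc2 : Cν + Cν = ENNReal.ofReal (B * Real.pi ^ 2 / 2) := by
    rw [hCν, ← ENNReal.ofReal_add (by positivity) (by positivity)]
    ring_nf
  have htailb : ∫⁻ t in Eᶜ, g t ∂ν ≤ ENNReal.ofReal (A / 2) := by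
    calc ∫⁻ t in Eᶜ, g t ∂ν ≤ ∫⁻ t in ⋃ k : ℕ, (P k ∪ Q k), g t ∂ν :=
          lintegral_mono_set hcover
      _ ≤ ∑' k : ℕ, ∫⁻ t in P k ∪ Q k, g t ∂ν := lintegral_iUnion_le _ _
      _ ≤ ∑' k : ℕ, a k * ENNReal.ofReal (B * Real.pi ^ 2 / 2) := by
          refine ENNReal.tsum_le_tsum fun k => ?_
          calc ∫⁻ t in P k ∪ Q k, g t ∂ν
              ≤ ∫⁻ t in P k, g t ∂ν + ∫⁻ t in Q k, g t ∂ν := lintegral_union_le _ _ _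
            _ ≤ a k * ν (P k) + a k * ν (Q k) := by
                gcongr
                · calc ∫⁻ t in P k, g t ∂ν ≤ ∫⁻ _ in P k, a k ∂ν :=
                        setLIntegral_mono' measurableSet_Ico fun t ht => hbound k t (Or.inl ht)
                    _ = a k * ν (P k) := setLIntegral_const _ _
                · calc ∫⁻ t in Q k, g t ∂ν ≤ ∫⁻ _ in Q k, a k ∂ν :=
                        setLIntegral_mono' measurableSet_Ioc fun t ht => hbound k t (Or.inr ht)
                    _ = a k * ν (Q k) := setLIntegral_const _ _
            _ ≤ a k * Cν + a k * Cν := by gcongr <;> [exact hνP k; exact hνQ k]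
            _ = a k * ENNReal.ofReal (B * Real.pi ^ 2 / 2) := by rw [← mul_add, hc2]
      _ = (∑' k : ℕ, a k) * ENNReal.ofReal (B * Real.pi ^ 2 / 2) := ENNReal.tsum_mul_right
      _ ≤ ENNReal.ofReal (1/(M:ℝ)) * ENNReal.ofReal (B * Real.pi ^ 2 / 2) :=
          mul_le_mul_left (tsum_telescope_le M hM) _
      _ = ENNReal.ofReal (B * Real.pi ^ 2 / (2 * M)) := by
          rw [← ENNReal.ofReal_mul (by positivity)]
          congr 1
          field_simp
      _ ≤ ENNReal.ofReal (A / 2) := ENNReal.ofReal_le_ofReal htail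
  have htotal : ENNReal.ofReal (A/2) + ENNReal.ofReal (A/2) ≤ ν E + ENNReal.ofReal (A/2) := by
    calc ENNReal.ofReal (A/2) + ENNReal.ofReal (A/2)
        = ENNReal.ofReal A := by
          rw [← ENNReal.ofReal_add (by positivity) (by positivity)]; ring_nf
      _ ≤ ∫⁻ t, g t ∂ν := hlow c
      _ = ∫⁻ t in E, g t ∂ν + ∫⁻ t in Eᶜ, g t ∂ν := hsplit
      _ ≤ ν E + ENNReal.ofReal (A/2) := add_le_add hEbound htailb
  exact (ENNReal.add_le_add_iff_right ENNReal.ofReal_ne_top).mp htotal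

lemma growth_lower {d : ℝ≥0∞} {R₀ : ℝ} (hR₀ : 0 < R₀)
    (hstep : ∀ x : ℝ, d ≤ ν (Set.Ico x (x + R₀))) (x : ℝ) (n : ℕ) :
    (n : ℝ≥0∞) * d ≤ ν (Set.Ico x (x + n * R₀)) := by
  induction n with
  | zero => simp
  | succ n ih =>
    have h1 : x ≤ x + n * R₀ := by nlinarith [Nat.cast_nonneg (α := ℝ) n]
    have h2 : x + n * R₀ ≤ x + (n+1) * R₀ := by nlinarith
    have hun : Set.Ico x (x + n * R₀) ∪ Set.Ico (x + n * R₀) (x + (n+1) * R₀)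
        = Set.Ico x (x + (n+1) * R₀) := Set.Ico_union_Ico_eq_Ico h1 h2
    have hdis : Disjoint (Set.Ico x (x + n * R₀)) (Set.Ico (x + n * R₀) (x + (n+1) * R₀)) := by
      rw [Set.disjoint_left]
      rintro t ⟨_, h⟩ ⟨h', _⟩
      exact absurd h' (not_le.mpr h)
    have hmeas := measure_union hdis measurableSet_Ico (μ := ν)
    rw [hun] at hmeas
    push_cast
    calc ((n : ℝ≥0∞) + 1) * d = (n : ℝ≥0∞) * d + d := by ring
      _ ≤ ν (Set.Ico x (x + n * R₀)) + ν (Set.Ico (x + n * R₀) (x + n * R₀ + R₀)) :=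
          add_le_add ih (hstep _)
      _ = ν (Set.Ico x (x + ((n:ℝ)+1) * R₀)) := by
          have he : x + (n:ℝ) * R₀ + R₀ = x + ((n:ℝ)+1) * R₀ := by ring
          rw [he, ← hmeas]
      _ = _ := by norm_num

lemma growth_upper {Cν : ℝ≥0∞}
    (hstep : ∀ a : ℝ, ν (Set.Icc a (a + 1)) ≤ Cν) (x : ℝ) (n : ℕ) :
    ν (Set.Ico x (x + n)) ≤ (n : ℝ≥0∞) * Cν := by
  induction n with
  | zero => simp
  | succ n ih =>
    have hsub : Set.Ico x (x + (n+1:ℕ)) ⊆ Set.Ico x (x + n) ∪ Set.Icc (x + n) (x + n + 1) := by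
      intro t ht
      rcases lt_or_ge t (x + n) with h | h
      · exact Or.inl ⟨ht.1, h⟩
      · refine Or.inr ⟨h, ?_⟩
        have := ht.2
        push_cast at this
        linarith
    calc ν (Set.Ico x (x + (n+1:ℕ)))
        ≤ ν (Set.Ico x (x + n)) + ν (Set.Icc (x + n) (x + n + 1)) :=
          le_trans (measure_mono hsub) (measure_union_le _ _)
      _ ≤ (n : ℝ≥0∞) * Cν + Cν := add_le_add ih (hstep _)
      _ = ((n+1 : ℕ) : ℝ≥0∞) * Cν := by push_cast; ring

set_option maxHeartbeats 2000000 in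
/-- If `ν` is a frame measure for Lebesgue measure restricted to `[-1/2, 1/2]`, then the lower
Beurling density of `ν` is positive and `dim ν = 1`. -/
theorem stmt16 (ν : Measure ℝ)
    (hframe : ∃ A B : ℝ, 0 < A ∧ 0 < B ∧
      IsFrameBounds1 (volume.restrict (Set.Icc (-(1 / 2) : ℝ) (1 / 2))) ν A B) :
    0 < lowerBeurlingDensity1 ν ∧ beurlingDim1 ν = 1 := by
  obtain ⟨A, B, hA, hB, hfr⟩ := hframe
  have hπ := Real.pi_pos
  have hkey : ∀ c : ℝ, (∫⁻ t, (‖ftm1 μ₀ (fmod c) t‖₊ : ℝ≥0∞) ^ 2 ∂ν)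
      = ∫⁻ t, ENNReal.ofReal (S (t - c) ^ 2) ∂ν :=
    fun c => lintegral_congr fun t => ftm_nnnorm c t
  have hbes : ∀ c : ℝ, ∫⁻ t, ENNReal.ofReal (S (t - c) ^ 2) ∂ν ≤ ENNReal.ofReal B := by
    intro c
    have h := (hfr (fmod c) (fmod_memℒp c)).2
    rwa [hkey c, fmod_l2, mul_one] at h
  have hlow : ∀ c : ℝ, ENNReal.ofReal A ≤ ∫⁻ t, ENNReal.ofReal (S (t - c) ^ 2) ∂ν := by
    intro c
    have h := (hfr (fmod c) (fmod_memℒp c)).1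
    rwa [hkey c, fmod_l2, mul_one] at h
  set C₀ : ℝ := B * Real.pi ^ 2 / 4 with hC₀def
  have hC₀ : 0 < C₀ := by positivity
  have hlen : ∀ a : ℝ, ν (Set.Icc a (a + 1)) ≤ ENNReal.ofReal C₀ := nu_Icc_le hB hbes
  set M : ℕ := max 1 ⌈B * Real.pi ^ 2 / A⌉₊ with hMdef
  have hM : 1 ≤ M := le_max_left _ _
  have hM0 : (0:ℝ) < M := by exact_mod_cast hM
  have htail : B * Real.pi ^ 2 / (2 * M) ≤ A / 2 := by
    have h1 : B * Real.pi ^ 2 / A ≤ (M:ℝ) := by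
      refine le_trans (Nat.le_ceil _) ?_
      rw [hMdef]
      exact_mod_cast le_max_right 1 _
    rw [div_le_iff₀ hA] at h1
    rw [div_le_div_iff₀ (by positivity) (by norm_num)]
    nlinarith
  have hbig : ∀ c : ℝ, ENNReal.ofReal (A / 2) ≤ ν (Set.Icc (c - M) (c + M)) :=
    nu_big hA hB hbes hlow M hM htail
  set R₀ : ℝ := 2 * M + 1 with hR₀def
  have hR₀ : 0 < R₀ := by positivity
  have hstep : ∀ x : ℝ, ENNReal.ofReal (A / 2) ≤ ν (Set.Ico x (x + R₀)) := by
    intro x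
    refine le_trans (hbig (x + M + 1/2)) (measure_mono ?_)
    intro t ht
    obtain ⟨h1, h2⟩ := ht
    constructor
    · linarith
    · rw [hR₀def]; linarith
  clear_value R₀
  have hraw : ∀ R : ℝ, 2 * R₀ ≤ R → ∀ x : ℝ,
      ENNReal.ofReal (A / (4 * R₀) * R) ≤ ν (cube1 x R) := by
    intro R hR x
    set n : ℕ := ⌊R / R₀⌋₊ with hndef
    have hRpos : 0 < R := by linarith
    have hfl : (n:ℝ) ≤ R / R₀ := Nat.floor_le (by positivity)
    have hfl2 : R / R₀ < n + 1 := Nat.lt_floor_add_one _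
    have hn1 : 1 ≤ n := by
      rw [hndef]
      apply Nat.le_floor
      rw [Nat.cast_one, le_div_iff₀ hR₀]
      linarith
    clear_value n
    have hnR : (n:ℝ) * R₀ ≤ R := by
      rw [← le_div_iff₀ hR₀]
      exact hfl
    have hsub : Set.Ico x (x + n * R₀) ⊆ cube1 x R := fun t ht =>
      ⟨ht.1, lt_of_lt_of_le ht.2 (by linarith)⟩
    have hν : ((n:ℝ≥0∞)) * ENNReal.ofReal (A / 2) ≤ ν (cube1 x R) :=
      le_trans (growth_lower hR₀ hstep x n) (measure_mono hsub)
    have hcmp : A / (4 * R₀) * R ≤ (n:ℝ) * (A / 2) := by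
      have hn1' : (1:ℝ) ≤ n := by exact_mod_cast hn1
      have h2n : R < 2 * n * R₀ := by
        rw [div_lt_iff₀ hR₀] at hfl2
        nlinarith
      rw [div_mul_eq_mul_div, div_le_iff₀ (by positivity)]
      nlinarith [mul_le_mul_of_nonneg_left h2n.le hA.le]
    calc ENNReal.ofReal (A / (4 * R₀) * R)
        ≤ ENNReal.ofReal ((n:ℝ) * (A / 2)) := ENNReal.ofReal_le_ofReal hcmp
      _ = (n:ℝ≥0∞) * ENNReal.ofReal (A / 2) := by
          rw [ENNReal.ofReal_mul (Nat.cast_nonneg n), ENNReal.ofReal_natCast]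
      _ ≤ _ := hν
  have hlower : ENNReal.ofReal (A / (4 * R₀)) ≤ lowerBeurlingDensity1 ν := by
    apply le_liminf_of_le (by isBoundedDefault)
    filter_upwards [eventually_ge_atTop (2 * R₀)] with R hR
    refine le_iInf fun x => ?_
    rw [ENNReal.le_div_iff_mul_le
      (Or.inl (ENNReal.ofReal_pos.mpr (by linarith)).ne') (Or.inl ENNReal.ofReal_ne_top)]
    rw [← ENNReal.ofReal_mul (by positivity)]
    exact hraw R hR x
  have hpos : 0 < lowerBeurlingDensity1 ν :=
    lt_of_lt_of_le (ENNReal.ofReal_pos.mpr (by positivity)) hlower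
  refine ⟨hpos, ?_⟩
  have hcubeU : ∀ R : ℝ, 1 ≤ R → ∀ x : ℝ, ν (cube1 x R) ≤ ENNReal.ofReal (2 * C₀ * R) := by
    intro R hR x
    set n : ℕ := ⌈R⌉₊ with hndef
    have h1 : R ≤ n := Nat.le_ceil R
    have h2 : (n:ℝ) < R + 1 := Nat.ceil_lt_add_one (by linarith)
    clear_value n
    have hsub : cube1 x R ⊆ Set.Ico x (x + n) := fun t ht =>
      ⟨ht.1, lt_of_lt_of_le ht.2 (by linarith)⟩
    calc ν (cube1 x R) ≤ (n:ℝ≥0∞) * ENNReal.ofReal C₀ :=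
          le_trans (measure_mono hsub) (growth_upper hlen x n)
      _ = ENNReal.ofReal ((n:ℝ) * C₀) := by
          rw [ENNReal.ofReal_mul (Nat.cast_nonneg n), ENNReal.ofReal_natCast]
      _ ≤ ENNReal.ofReal (2 * C₀ * R) := ENNReal.ofReal_le_ofReal (by nlinarith)
  have hdimle : beurlingDim1 ν ≤ 1 := by
    refine iSup_le fun α => iSup_le fun hα => iSup_le fun hdens => ?_
    rcases le_or_gt α 1 with h | h
    · calc ENNReal.ofReal α ≤ ENNReal.ofReal 1 := ENNReal.ofReal_le_ofReal h
        _ = 1 := ENNReal.ofReal_one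
    · exfalso
      have hfin : beurlingDensity1 ν α ≤ ENNReal.ofReal (2 * C₀) := by
        apply limsup_le_of_le (by isBoundedDefault)
        filter_upwards [eventually_ge_atTop (1:ℝ)] with R hR
        refine iSup_le fun x => ?_
        apply ENNReal.div_le_of_le_mul
        calc ν (cube1 x R) ≤ ENNReal.ofReal (2 * C₀ * R) := hcubeU R hR x
          _ ≤ ENNReal.ofReal (2 * C₀ * R ^ α) := ENNReal.ofReal_le_ofReal (by
              have hRα : R ≤ R ^ α := by
                calc R = R ^ (1:ℝ) := (Real.rpow_one R).symm
                  _ ≤ R ^ α := Real.rpow_le_rpow_of_exponent_le hR h.le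
              nlinarith)
          _ = ENNReal.ofReal (2 * C₀) * ENNReal.ofReal (R ^ α) :=
              ENNReal.ofReal_mul (by positivity)
      rw [hdens] at hfin
      exact (lt_irrefl _ (lt_of_le_of_lt hfin ENNReal.ofReal_lt_top))
  have hdens : ∀ α : ℝ, 0 ≤ α → α < 1 → beurlingDensity1 ν α = ∞ := by
    intro α hα0 hα1
    apply ENNReal.eq_top_of_forall_nnreal_le
    intro r
    have hT : Tendsto (fun R : ℝ => A / (4 * R₀) * R ^ (1 - α)) atTop atTop :=
      Tendsto.const_mul_atTop (by positivity) (tendsto_rpow_atTop (by linarith))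
    have hev : ∀ᶠ R : ℝ in atTop, (r:ℝ) ≤ A / (4 * R₀) * R ^ (1 - α) :=
      hT.eventually_ge_atTop r
    have hlim : (r:ℝ≥0∞) ≤ liminf
        (fun R : ℝ => ⨆ x : ℝ, ν (cube1 x R) / ENNReal.ofReal (R ^ α)) atTop := by
      apply le_liminf_of_le (by isBoundedDefault)
      filter_upwards [hev, eventually_ge_atTop (2 * R₀), eventually_ge_atTop (1:ℝ)]
        with R h1 h2 h3
      refine le_trans ?_ (le_iSup _ (0:ℝ))
      have hRpos : (0:ℝ) < R := by linarith
      rw [ENNReal.le_div_iff_mul_le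
        (Or.inl (ENNReal.ofReal_pos.mpr (by positivity)).ne') (Or.inl ENNReal.ofReal_ne_top)]
      rw [← ENNReal.ofReal_coe_nnreal, ← ENNReal.ofReal_mul (r.coe_nonneg)]
      refine le_trans (ENNReal.ofReal_le_ofReal ?_) (hraw R h2 0)
      have hpow : R ^ (1 - α) * R ^ α = R := by
        rw [← Real.rpow_add hRpos]; norm_num
      calc (r:ℝ) * R ^ α ≤ (A / (4 * R₀) * R ^ (1 - α)) * R ^ α :=
            mul_le_mul_of_nonneg_right h1 (Real.rpow_nonneg hRpos.le α)
        _ = A / (4 * R₀) * R := by rw [mul_assoc, hpow]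
    exact le_trans hlim liminf_le_limsup
  have hdimge : (1:ℝ≥0∞) ≤ beurlingDim1 ν := by
    refine le_of_forall_lt fun w hw => ?_
    have hwt : w ≠ ⊤ := hw.ne_top
    have hr0 : 0 ≤ w.toReal := ENNReal.toReal_nonneg
    have hr1 : w.toReal < 1 := by
      have h := (ENNReal.toReal_lt_toReal hwt (by norm_num : (1:ℝ≥0∞) ≠ ⊤)).mpr hw
      simpa using h
    set α : ℝ := (w.toReal + 1) / 2 with hαdef
    have hα0 : 0 ≤ α := by positivity
    have hα1 : α < 1 := by rw [hαdef]; linarith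
    have hwα : w < ENNReal.ofReal α := by
      rw [← ENNReal.ofReal_toReal hwt]
      exact (ENNReal.ofReal_lt_ofReal_iff (by positivity)).mpr (by rw [hαdef]; linarith)
    refine lt_of_lt_of_le hwα ?_
    exact le_iSup_of_le α (le_iSup_of_le hα0 (le_iSup_of_le (hdens α hα0 hα1) le_rfl))
  exact le_antisymm hdimle hdimge
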